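/- Let w ≠ id be a permutation with ℓ = ℓ(w), and set w_j = φ^{ℓ−j}(w) for 0 ≤ j ≤ ℓ (this is well defined: each application of φ strictly decreases the length by 1, so w_j ≠ id for j ≥ 1). Then w_0 = id, w_{j−1} ⋖_{κ(w_j)} w_j for every 1 ≤ j ≤ ℓ, and the labels satisfy d₁(w) ≤ κ(w_1) ≤ κ(w_2) ≤ ⋯ ≤ κ(w_ℓ) = κ(w). -/

import Mathlib

/-- A permutation of the positive integers, modeled as a permutation of `ℕ`
fixing `0` (and, separately assumed, all but finitely many points). -/
def FinPerm (w : Equiv.Perm ℕ) : Prop :=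
  w 0 = 0 ∧ {i : ℕ | w i ≠ i}.Finite

/-- The length `ℓ(w)`: the number of inversions, i.e. pairs `i < j` with `w i > w j`. -/
noncomputable def len (w : Equiv.Perm ℕ) : ℕ :=
  {p : ℕ × ℕ | p.1 < p.2 ∧ w p.2 < w p.1}.ncard

/-- The set of descents: positions `i ≥ 1` with `w i > w (i+1)`. -/
def descents (w : Equiv.Perm ℕ) : Set ℕ :=
  {i : ℕ | 0 < i ∧ w (i + 1) < w i}

/-- `d₁(w)`: the first (smallest) descent of `w`. -/
noncomputable def d1 (w : Equiv.Perm ℕ) : ℕ := sInf (descents w)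

/-- `d₂(w)`: the last (largest) descent of `w`. -/
noncomputable def d2 (w : Equiv.Perm ℕ) : ℕ := sSup (descents w)

/-- `kCover k ρ π` means `ρ ⋖_k π`:  `π = ρ t_{a b}` for some positive
`a ≤ k < b`, with `ℓ(π) = ℓ(ρ) + 1`. -/
def kCover (k : ℕ) (ρ π : Equiv.Perm ℕ) : Prop :=
  ∃ a b : ℕ, 0 < a ∧ a ≤ k ∧ k < b ∧ π = ρ * Equiv.swap a b ∧ len π = len ρ + 1


/-- `i(w)`: the largest position `i` with `w⁻¹(w(i)+1) < i`. -/
noncomputable def iw (w : Equiv.Perm ℕ) : ℕ :=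
  sSup {i : ℕ | 0 < i ∧ w⁻¹ (w i + 1) < i}

/-- `φ(w) = t_{w(i(w)), w(i(w))+1} ∘ w`, swapping the values `w(i(w))` and `w(i(w))+1`. -/
noncomputable def phi (w : Equiv.Perm ℕ) : Equiv.Perm ℕ :=
  Equiv.swap (w (iw w)) (w (iw w) + 1) * w

/-- `κ(w) = i(w) - 1`. -/
noncomputable def kappa (w : Equiv.Perm ℕ) : ℕ := iw w - 1

/- ### Auxiliary lemmas -/

def InvSet (w : Equiv.Perm ℕ) : Set (ℕ × ℕ) := {p : ℕ × ℕ | p.1 < p.2 ∧ w p.2 < w p.1}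

lemma len_def (w : Equiv.Perm ℕ) : len w = (InvSet w).ncard := rfl

lemma exists_bound (w : Equiv.Perm ℕ) (hw : FinPerm w) :
    ∃ N, ∀ x, N < x → w x = x ∧ w⁻¹ x = x := by
  obtain ⟨N, hN⟩ := hw.2.bddAbove
  refine ⟨N, fun x hx => ?_⟩
  have h1 : w x = x := by
    by_contra h
    exact absurd (hN h) (not_le.2 hx)
  refine ⟨h1, ?_⟩
  rw [Equiv.Perm.inv_eq_iff_eq]
  exact h1.symm

lemma invSet_finite (w : Equiv.Perm ℕ) (hw : FinPerm w) : (InvSet w).Finite := by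
  obtain ⟨N, hN⟩ := exists_bound w hw
  apply Set.Finite.subset ((Set.finite_Iic N).prod (Set.finite_Iic N))
  rintro ⟨x, y⟩ ⟨hxy, hlt⟩
  dsimp only at hxy hlt
  simp only [Set.mem_prod, Set.mem_Iic]
  have hy : y ≤ N := by
    by_contra h
    push_neg at h
    have h1 : w y = y := (hN y h).1
    rw [h1] at hlt
    -- w x > y > x, so w x ≠ x, and w (w x) ≠ w x would give bound
    have hx1 : w x ≠ x := by omega
    have hwx : w x ≤ N := by
      by_contra h2
      push_neg at h2
      have := (hN (w x) h2).1
      exact hx1 (w.injective this)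
    omega
  exact ⟨by omega, hy⟩

lemma len_one : len (1 : Equiv.Perm ℕ) = 0 := by
  have h : InvSet (1 : Equiv.Perm ℕ) = ∅ := by
    ext ⟨x, y⟩
    simp only [InvSet, Set.mem_setOf_eq, Equiv.Perm.one_apply, Set.mem_empty_iff_false, iff_false]
    omega
  rw [len_def, h, Set.ncard_empty]

lemma S_nonempty (w : Equiv.Perm ℕ) (hw : FinPerm w) (hne : w ≠ 1) :
    {i : ℕ | 0 < i ∧ w⁻¹ (w i + 1) < i}.Nonempty := by
  by_contra h
  rw [Set.not_nonempty_iff_eq_empty] at h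
  have hall : ∀ i, 0 < i → i ≤ w⁻¹ (w i + 1) := by
    intro i hi
    by_contra h2
    exact absurd (Set.eq_empty_iff_forall_notMem.1 h i) (by simp [hi, -Equiv.Perm.coe_inv]; omega)
  have hinv0 : w⁻¹ 0 = 0 := by
    rw [Equiv.Perm.inv_eq_iff_eq]
    exact hw.1.symm
  have hmono : StrictMono (fun n => w⁻¹ n) := by
    apply strictMono_nat_of_lt_succ
    intro n
    rcases Nat.eq_zero_or_pos n with rfl | hn
    · rw [show (0:ℕ)+1 = 1 from rfl, hinv0]
      have : w⁻¹ 1 ≠ 0 := by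
        intro h2
        rw [Equiv.Perm.inv_eq_iff_eq, hw.1] at h2
        omega
      omega
    · set i := w⁻¹ n with hi
      have hwi : w i = n := Equiv.apply_symm_apply w n
      have hipos : 0 < i := by
        rcases Nat.eq_zero_or_pos i with h0 | h0
        · rw [h0] at hwi; rw [hw.1] at hwi; omega
        · exact h0
      have h1 := hall i hipos
      rw [hwi] at h1
      have h2 : w⁻¹ (n + 1) ≠ i := by
        intro h3
        rw [Equiv.Perm.inv_eq_iff_eq, hwi] at h3
        omega
      omega
  have hid : ∀ n, w⁻¹ n = n := by
    intro n
    induction n using Nat.strong_induction_on with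
    | _ n ih =>
      have h1 : n ≤ w⁻¹ n := hmono.le_apply
      set m := w n with hm
      have h2 : w⁻¹ m = n := Equiv.symm_apply_apply w n
      rcases lt_trichotomy m n with h3 | h3 | h3
      · have := ih m h3
        omega
      · rw [h3] at h2; exact h2
      · have : w⁻¹ n < w⁻¹ m := hmono h3
        omega
  exact hne (by
    ext x
    have h1 := hid (w x)
    rw [show ∀ y, w⁻¹ (w y) = y from Equiv.symm_apply_apply w] at h1
    simpa using h1.symm)

lemma S_bddAbove (w : Equiv.Perm ℕ) (hw : FinPerm w) :
    BddAbove {i : ℕ | 0 < i ∧ w⁻¹ (w i + 1) < i} := by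
  obtain ⟨N, hN⟩ := exists_bound w hw
  refine ⟨N, fun i hi => ?_⟩
  obtain ⟨hi0, hi1⟩ := hi
  by_contra h
  push_neg at h
  have h1 : w i = i := (hN i h).1
  have h2 : w⁻¹ (i + 1) = i + 1 := (hN (i + 1) (by omega)).2
  rw [h1, h2] at hi1
  omega

lemma iw_spec (w : Equiv.Perm ℕ) (hw : FinPerm w) (hne : w ≠ 1) :
    0 < iw w ∧ w⁻¹ (w (iw w) + 1) < iw w :=
  Nat.sSup_mem (S_nonempty w hw hne) (S_bddAbove w hw)

lemma le_iw (w : Equiv.Perm ℕ) (hw : FinPerm w) {i : ℕ} (h1 : 0 < i)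
    (h2 : w⁻¹ (w i + 1) < i) : i ≤ iw w :=
  le_csSup (S_bddAbove w hw) ⟨h1, h2⟩

lemma phi_eq (w : Equiv.Perm ℕ) :
    phi w = w * Equiv.swap (iw w) (w⁻¹ (w (iw w) + 1)) := by
  have h : w (w⁻¹ (w (iw w) + 1)) = w (iw w) + 1 := Equiv.apply_symm_apply _ _
  rw [phi]
  conv_lhs => rw [← h]
  rw [Equiv.swap_apply_apply]
  group

lemma phi_apply (w : Equiv.Perm ℕ) (x : ℕ) :
    phi w x = w (Equiv.swap (iw w) (w⁻¹ (w (iw w) + 1)) x) := by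
  rw [phi_eq]; rfl

lemma phi_apply_iw (w : Equiv.Perm ℕ) : phi w (iw w) = w (iw w) + 1 := by
  rw [phi_apply, Equiv.swap_apply_left, show ∀ y, w (w⁻¹ y) = y from Equiv.apply_symm_apply w]

lemma phi_apply_p (w : Equiv.Perm ℕ) : phi w (w⁻¹ (w (iw w) + 1)) = w (iw w) := by
  rw [phi_apply, Equiv.swap_apply_right]

lemma phi_apply_other (w : Equiv.Perm ℕ) {x : ℕ} (h1 : x ≠ iw w)
    (h2 : x ≠ w⁻¹ (w (iw w) + 1)) : phi w x = w x := by
  rw [phi_apply, Equiv.swap_apply_of_ne_of_ne h1 h2]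

lemma p_pos (w : Equiv.Perm ℕ) (hw : FinPerm w) : 0 < w⁻¹ (w (iw w) + 1) := by
  rcases Nat.eq_zero_or_pos (w⁻¹ (w (iw w) + 1)) with h | h
  · exfalso
    have h2 : w (w⁻¹ (w (iw w) + 1)) = w (iw w) + 1 := Equiv.apply_symm_apply w (w (iw w) + 1)
    rw [h, hw.1] at h2
    omega
  · exact h

lemma invSet_swap (w : Equiv.Perm ℕ) {i p : ℕ} (hpi : p < i) (hwp : w p = w i + 1) :
    InvSet w = insert (p, i) (InvSet (Equiv.swap (w i) (w i + 1) * w)) ∧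
      (p, i) ∉ InvSet (Equiv.swap (w i) (w i + 1) * w) := by
  set u := Equiv.swap (w i) (w i + 1) * w with hu
  have hui : u i = w i + 1 := by
    rw [hu]; simp [Equiv.Perm.mul_apply, Equiv.swap_apply_left]
  have hup : u p = w i := by
    rw [hu]; simp [Equiv.Perm.mul_apply, hwp, Equiv.swap_apply_right]
  have hinj : ∀ a b : ℕ, w a = w b → a = b := fun a b h => w.injective h
  have hux : ∀ x, x ≠ i → x ≠ p → u x = w x := by
    intro x h1 h2
    rw [hu]
    simp only [Equiv.Perm.mul_apply]
    apply Equiv.swap_apply_of_ne_of_ne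
    · exact fun h => h1 (hinj _ _ h)
    · exact fun h => h2 (hinj _ _ (by rw [h, hwp]))
  have hnot : (p, i) ∉ InvSet u := by
    rintro ⟨h1, h2⟩
    dsimp only at h2
    rw [hui, hup] at h2
    omega
  refine ⟨?_, hnot⟩
  ext ⟨x, y⟩
  simp only [InvSet, Set.mem_setOf_eq, Set.mem_insert_iff, Prod.mk.injEq]
  constructor
  · rintro ⟨hxy, hlt⟩
    by_cases hx : x = p ∧ y = i
    · exact Or.inl hx
    right
    refine ⟨hxy, ?_⟩
    rcases eq_or_ne x i with hxI | hxI
    · have hltI : w y < w i := hxI ▸ hlt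
      have hyP : y ≠ p := fun h => by rw [h, hwp] at hltI; omega
      have hyI : y ≠ i := fun h => by rw [h] at hltI; omega
      rw [hxI, hui, hux y hyI hyP]
      omega
    rcases eq_or_ne x p with hxP | hxP
    · have hyI : y ≠ i := fun h => hx ⟨hxP, h⟩
      have hltP : w y < w i + 1 := by rw [← hwp, ← hxP]; exact hlt
      have hyP : y ≠ p := fun h => by rw [h, hwp] at hltP; omega
      have h5 : w y ≠ w i := fun h => hyI (hinj _ _ h)
      rw [hxP, hup, hux y hyI hyP]
      omega
    · rw [hux x hxI hxP]
      rcases eq_or_ne y i with hyI | hyI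
      · have h5 : w x ≠ w i + 1 := fun h => hxP (hinj _ _ (by rw [h, hwp]))
        have h6 : w i < w x := by rw [← hyI]; exact hlt
        rw [hyI, hui]
        omega
      rcases eq_or_ne y p with hyP | hyP
      · have h6 : w i + 1 < w x := by rw [← hwp, ← hyP]; exact hlt
        rw [hyP, hup]
        omega
      · rw [hux y hyI hyP]; exact hlt
  · rintro (⟨hxP, hyI⟩ | ⟨hxy, hlt⟩)
    · rw [hxP, hyI, hwp]
      exact ⟨hpi, by omega⟩
    refine ⟨hxy, ?_⟩
    rcases eq_or_ne x i with hxI | hxI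
    · rcases eq_or_ne y p with hyP | hyP
      · exfalso; rw [hxI, hyP] at hxy; omega
      · have hyI : y ≠ i := fun h => by rw [hxI] at hxy; omega
        rw [hxI, hui, hux y hyI hyP] at hlt
        have h6 : w y ≠ w i := fun h => hyI (hinj _ _ h)
        rw [hxI]
        omega
    rcases eq_or_ne x p with hxP | hxP
    · rw [hxP, hup] at hlt
      rcases eq_or_ne y i with hyI | hyI
      · rw [hyI, hxP, hwp]
        omega
      rcases eq_or_ne y p with hyP | hyP
      · exfalso; rw [hxP, hyP] at hxy; omega
      · rw [hux y hyI hyP] at hlt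
        rw [hxP, hwp]
        omega
    · rw [hux x hxI hxP] at hlt
      rcases eq_or_ne y i with hyI | hyI
      · rw [hyI, hui] at hlt
        rw [hyI]
        omega
      rcases eq_or_ne y p with hyP | hyP
      · rw [hyP, hup] at hlt
        have h5 : w x ≠ w i + 1 := fun h => hxP (hinj _ _ (by rw [h, hwp]))
        rw [hyP, hwp]
        omega
      · rw [hux y hyI hyP] at hlt; exact hlt

lemma invSet_phi (w : Equiv.Perm ℕ) (hw : FinPerm w) (hne : w ≠ 1) :
    InvSet w = insert (w⁻¹ (w (iw w) + 1), iw w) (InvSet (phi w)) ∧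
      (w⁻¹ (w (iw w) + 1), iw w) ∉ InvSet (phi w) := by
  have h := invSet_swap w (iw_spec w hw hne).2 (Equiv.apply_symm_apply w (w (iw w) + 1))
  rw [phi]
  exact h

lemma finperm_phi (w : Equiv.Perm ℕ) (hw : FinPerm w) (hne : w ≠ 1) : FinPerm (phi w) := by
  obtain ⟨hi0, hpi⟩ := iw_spec w hw hne
  have hp0 := p_pos w hw
  constructor
  · rw [phi_apply_other w (by omega) (by omega), hw.1]
  · apply Set.Finite.subset (hw.2.union ((Set.finite_singleton (w⁻¹ (w (iw w) + 1))).insert (iw w)))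
    intro x hx
    by_cases h1 : x = iw w
    · exact Or.inr (by simp [h1])
    by_cases h2 : x = w⁻¹ (w (iw w) + 1)
    · exact Or.inr (by simp [h2])
    · left
      rw [Set.mem_setOf_eq, phi_apply_other w h1 h2] at hx
      exact hx

lemma len_phi (w : Equiv.Perm ℕ) (hw : FinPerm w) (hne : w ≠ 1) :
    len w = len (phi w) + 1 := by
  obtain ⟨heq, hnot⟩ := invSet_phi w hw hne
  rw [len_def, len_def, heq,
    Set.ncard_insert_of_notMem hnot (invSet_finite _ (finperm_phi w hw hne))]

lemma eq_one_of_len_eq_zero (w : Equiv.Perm ℕ) (hw : FinPerm w) (h : len w = 0) : w = 1 := by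
  by_contra hne
  obtain ⟨i, hi0, hlt⟩ := S_nonempty w hw hne
  have hmem : (w⁻¹ (w i + 1), i) ∈ InvSet w :=
    ⟨hlt, by dsimp only; rw [show ∀ y, w (w⁻¹ y) = y from Equiv.apply_symm_apply w]; omega⟩
  rw [len_def, Set.ncard_eq_zero (invSet_finite w hw)] at h
  rw [h] at hmem
  exact hmem

lemma kCover_phi (w : Equiv.Perm ℕ) (hw : FinPerm w) (hne : w ≠ 1) :
    kCover (kappa w) (phi w) w := by
  obtain ⟨hi0, hpi⟩ := iw_spec w hw hne
  refine ⟨w⁻¹ (w (iw w) + 1), iw w, p_pos w hw, by unfold kappa; omega,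
    by unfold kappa; omega, ?_, len_phi w hw hne⟩
  rw [phi_eq, Equiv.swap_comm (iw w), mul_assoc, Equiv.swap_mul_self, mul_one]

lemma exists_descent (u : Equiv.Perm ℕ) {p i : ℕ} (h1 : p < i) (h2 : u i < u p) :
    ∃ q, p ≤ q ∧ q < i ∧ u (q + 1) < u q := by
  by_contra h
  push_neg at h
  have key : ∀ k, p + k ≤ i → u p ≤ u (p + k) := by
    intro k
    induction k with
    | zero => intro _; exact le_rfl
    | succ k ih =>
      intro hk
      have h3 := h (p + k) (by omega) (by omega)
      have h4 := ih (by omega)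
      have : p + (k + 1) = (p + k) + 1 := by omega
      rw [this]
      omega
  have h5 := key (i - p) (by omega)
  rw [show p + (i - p) = i by omega] at h5
  omega

lemma descents_nonempty (w : Equiv.Perm ℕ) (hw : FinPerm w) (hne : w ≠ 1) :
    (descents w).Nonempty := by
  obtain ⟨i, hi0, hlt⟩ := S_nonempty w hw hne
  have hwp : w (w⁻¹ (w i + 1)) = w i + 1 := Equiv.apply_symm_apply w _
  have hp0 : 0 < w⁻¹ (w i + 1) := by
    rcases Nat.eq_zero_or_pos (w⁻¹ (w i + 1)) with h | h
    · rw [h, hw.1] at hwp; omega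
    · exact h
  obtain ⟨q, hq1, hq2, hq3⟩ := exists_descent w hlt (by rw [hwp]; omega)
  exact ⟨q, by omega, hq3⟩

lemma d1_le_kappa (w : Equiv.Perm ℕ) (hw : FinPerm w) (hne : w ≠ 1) :
    d1 w ≤ kappa w := by
  obtain ⟨hi0, hpi⟩ := iw_spec w hw hne
  have hwp : w (w⁻¹ (w (iw w) + 1)) = w (iw w) + 1 := Equiv.apply_symm_apply w _
  have hp0 := p_pos w hw
  obtain ⟨q, hq1, hq2, hq3⟩ := exists_descent w hpi (by rw [hwp]; omega)
  have h4 : d1 w ≤ q := Nat.sInf_le ⟨by omega, hq3⟩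
  unfold kappa
  omega
lemma no_new_descent (w : Equiv.Perm ℕ) (hw : FinPerm w) (hne : w ≠ 1) {q : ℕ}
    (hq : q ∈ descents (phi w)) : d1 w ≤ q := by
  obtain ⟨hq0, hqd⟩ := hq
  by_contra h
  push_neg at h
  have hnd : q ∉ descents w := fun hmem => by
    have h5 : d1 w ≤ q := Nat.sInf_le hmem
    omega
  have hmono : w q < w (q + 1) := by
    have h1 : ¬(0 < q ∧ w (q + 1) < w q) := hnd
    have h2 : w q ≠ w (q + 1) := fun h3 => by have := w.injective h3; omega
    omega
  obtain ⟨hi0, hpi⟩ := iw_spec w hw hne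
  have hwp : w (w⁻¹ (w (iw w) + 1)) = w (iw w) + 1 := Equiv.apply_symm_apply w _
  have hinj : ∀ a b : ℕ, w a = w b → a = b := fun a b h3 => w.injective h3
  rcases eq_or_ne q (iw w) with hqI | hqI
  · rw [hqI] at hqd hmono
    rw [phi_apply_iw w, phi_apply_other w (by omega) (by omega)] at hqd
    omega
  rcases eq_or_ne q (w⁻¹ (w (iw w) + 1)) with hqP | hqP
  · rw [hqP] at hqd hmono
    rw [phi_apply_p w] at hqd
    rw [hwp] at hmono
    rcases eq_or_ne (w⁻¹ (w (iw w) + 1) + 1) (iw w) with hq1 | hq1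
    · rw [hq1, phi_apply_iw w] at hqd
      omega
    · rw [phi_apply_other w hq1 (by omega)] at hqd
      omega
  · rw [phi_apply_other w hqI hqP] at hqd
    rcases eq_or_ne (q + 1) (iw w) with hq1 | hq1
    · rw [hq1] at hqd hmono
      rw [phi_apply_iw w] at hqd
      omega
    rcases eq_or_ne (q + 1) (w⁻¹ (w (iw w) + 1)) with hq2 | hq2
    · rw [hq2] at hqd hmono
      rw [phi_apply_p w] at hqd
      rw [hwp] at hmono
      have h6 : w q ≠ w (iw w) := fun h3 => hqI (hinj _ _ h3)
      omega
    · rw [phi_apply_other w hq1 hq2] at hqd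
      omega

lemma d1_le_d1_phi (w : Equiv.Perm ℕ) (hw : FinPerm w) (hne : w ≠ 1)
    (hw2 : FinPerm (phi w)) (hne2 : phi w ≠ 1) : d1 w ≤ d1 (phi w) :=
  no_new_descent w hw hne (Nat.sInf_mem (descents_nonempty (phi w) hw2 hne2))

lemma kappa_phi_le (w : Equiv.Perm ℕ) (hw : FinPerm w) (hne : w ≠ 1)
    (hw2 : FinPerm (phi w)) (hne2 : phi w ≠ 1) : kappa (phi w) ≤ kappa w := by
  have key : iw (phi w) ≤ iw w := by
    obtain ⟨hj0, hjlt⟩ := iw_spec (phi w) hw2 hne2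
    obtain ⟨hi0, hpi⟩ := iw_spec w hw hne
    have hwp : w (w⁻¹ (w (iw w) + 1)) = w (iw w) + 1 := Equiv.apply_symm_apply w _
    have hinj : ∀ a b : ℕ, w a = w b → a = b := fun a b h3 => w.injective h3
    by_contra h
    push_neg at h
    have hji : iw (phi w) ≠ iw w := by omega
    have hjp : iw (phi w) ≠ w⁻¹ (w (iw w) + 1) := by omega
    rw [phi_apply_other w hji hjp] at hjlt
    have hinv : ∀ y, (phi w)⁻¹ y =
        Equiv.swap (iw w) (w⁻¹ (w (iw w) + 1)) (w⁻¹ y) := by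
      intro y
      rw [phi_eq, mul_inv_rev, Equiv.swap_inv, Equiv.Perm.mul_apply]
    rw [hinv] at hjlt
    rcases eq_or_ne (w⁻¹ (w (iw (phi w)) + 1)) (iw w) with hc | hc
    · have h5 : iw (phi w) ≤ iw w := le_iw w hw (by omega) (by rw [hc]; omega)
      omega
    rcases eq_or_ne (w⁻¹ (w (iw (phi w)) + 1)) (w⁻¹ (w (iw w) + 1)) with hc2 | hc2
    · have h6 := w⁻¹.injective hc2
      have h7 : iw (phi w) = iw w := hinj _ _ (by omega)
      omega
    · rw [Equiv.swap_apply_of_ne_of_ne hc hc2] at hjlt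
      have h5 : iw (phi w) ≤ iw w := le_iw w hw (by omega) hjlt
      omega
  unfold kappa
  omega

lemma chain (w : Equiv.Perm ℕ) (hw : FinPerm w) :
    ∀ k, k ≤ len w → FinPerm (phi^[k] w) ∧ len (phi^[k] w) = len w - k := by
  intro k
  induction k with
  | zero =>
    intro _
    rw [Function.iterate_zero_apply]
    exact ⟨hw, by omega⟩
  | succ k ih =>
    intro hk
    obtain ⟨h1, h2⟩ := ih (by omega)
    have hne : phi^[k] w ≠ 1 := by
      intro h3
      rw [h3, len_one] at h2
      omega
    rw [Function.iterate_succ_apply']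
    have h4 := len_phi _ h1 hne
    exact ⟨finperm_phi _ h1 hne, by omega⟩

/-- The up-chain `ch↑(w)`: setting `w_j = φ^{ℓ-j}(w)`, the `w_j` form a mixed
chain from the identity to `w` with weakly increasing labels
`d₁(w) ≤ κ(w₁) ≤ ⋯ ≤ κ(w_ℓ) = κ(w)`. -/
theorem stmt8 (w : Equiv.Perm ℕ) (hw : FinPerm w) (hne : w ≠ 1) :
    phi^[len w] w = 1 ∧
    (∀ j, 1 ≤ j → j ≤ len w →
      kCover (kappa (phi^[len w - j] w)) (phi^[len w - j + 1] w) (phi^[len w - j] w)) ∧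
    d1 w ≤ kappa (phi^[len w - 1] w) ∧
    (∀ j, 1 ≤ j → j < len w →
      kappa (phi^[len w - j] w) ≤ kappa (phi^[len w - (j + 1)] w)) := by
  have hchain := chain w hw
  have hlpos : 1 ≤ len w := by
    rcases Nat.eq_zero_or_pos (len w) with h | h
    · exact absurd (eq_one_of_len_eq_zero w hw h) hne
    · exact h
  refine ⟨?_, ?_, ?_, ?_⟩
  · obtain ⟨h1, h2⟩ := hchain (len w) le_rfl
    exact eq_one_of_len_eq_zero _ h1 (by omega)
  · intro j hj1 hj2
    obtain ⟨h1, h2⟩ := hchain (len w - j) (by omega)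
    have hne' : phi^[len w - j] w ≠ 1 := fun h => by rw [h, len_one] at h2; omega
    rw [Function.iterate_succ_apply']
    exact kCover_phi _ h1 hne'
  · have dchain : ∀ m, m + 1 ≤ len w → d1 w ≤ d1 (phi^[m] w) := by
      intro m
      induction m with
      | zero => intro _; rw [Function.iterate_zero_apply]
      | succ m ih =>
        intro hm
        have h0 := ih (by omega)
        obtain ⟨h1, h2⟩ := hchain m (by omega)
        obtain ⟨h1', h2'⟩ := hchain (m + 1) (by omega)
        have hneA : phi^[m] w ≠ 1 := fun h => by rw [h, len_one] at h2; omega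
        have hneB : phi^[m + 1] w ≠ 1 := fun h => by rw [h, len_one] at h2'; omega
        rw [Function.iterate_succ_apply'] at hneB h1' ⊢
        exact le_trans h0 (d1_le_d1_phi _ h1 hneA h1' hneB)
    have h0 := dchain (len w - 1) (by omega)
    obtain ⟨h1, h2⟩ := hchain (len w - 1) (by omega)
    have hne' : phi^[len w - 1] w ≠ 1 := fun h => by rw [h, len_one] at h2; omega
    exact le_trans h0 (d1_le_kappa _ h1 hne')
  · intro j hj1 hj2
    have hstep : len w - j = (len w - (j + 1)) + 1 := by omega
    obtain ⟨h1, h2⟩ := hchain (len w - (j + 1)) (by omega)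
    obtain ⟨h1', h2'⟩ := hchain (len w - j) (by omega)
    have hneA : phi^[len w - (j + 1)] w ≠ 1 := fun h => by rw [h, len_one] at h2; omega
    have hneB : phi^[len w - j] w ≠ 1 := fun h => by rw [h, len_one] at h2'; omega
    rw [hstep] at hneB h1' ⊢
    rw [Function.iterate_succ_apply'] at hneB h1' ⊢
    exact kappa_phi_le _ h1 hneA h1' hneB
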